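/- Let Σ, Γ, Λ be finite alphabets, Ψ : Γ* → Σ* and Φ : Γ* → Λ* be monoid morphisms determined by their action on letters, and let M = max over γ ∈ Γ of |Ψ(γ)|. For every word u ∈ Γ*, if |Ψ(u)| > (|Λ|+1)·M, then there exist positions 1 ≤ k₁ < k₂ ≤ |u| such that (1) |Ψ(u[1..k₁−1])| ≤ (|Λ|+1)·M, (2) 1 ≤ |Ψ(u[k₁..k₂−1])| ≤ (|Λ|+1)·M, and (3) Φ(u[k₁]) = Φ(u[k₂]). -/

import Mathlib

/-- The morphism `Γ* → Σ*` extending the letter map `ψ`. -/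
def homExt {Γ S : Type*} (ψ : Γ → List S) (u : List Γ) : List S := (u.map ψ).flatten

private lemma sum_take_eq (v : List ℕ) (k : ℕ) :
    (v.take k).sum = ∑ i ∈ Finset.range k, v.getD i 0 := by
  induction v generalizing k with
  | nil => simp
  | cons x xs ih =>
    cases k with
    | zero => simp
    | succ k => simp [Finset.sum_range_succ', ih k, Nat.add_comm]

private lemma getD_drop' (v : List ℕ) (n m : ℕ) :
    (v.drop n).getD m 0 = v.getD (n + m) 0 := by
  simp [List.getD, List.getElem?_drop]

/-- Pumping lemma for morphisms: if `|Ψ(u)| > (|Λ|+1)·M` where `M` is the maximal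
length of the image of a letter, then there are positions `k₁ < k₂` of `u` such that
the image of the prefix before `k₁` is short, the image of the factor `u[k₁..k₂-1]`
is nonempty and short, and `Φ(u[k₁]) = Φ(u[k₂])`. (0-based indexing.) -/
theorem stmt5 {Γ S Λ : Type*} [Fintype Γ] [Fintype S] [Fintype Λ]
    (ψ : Γ → List S) (φ : Γ → Λ) (u : List Γ)
    (h : (Fintype.card Λ + 1) * (Finset.univ.sup fun γ => (ψ γ).length)
          < (homExt ψ u).length) :
    ∃ (k₁ k₂ : ℕ) (h₁ : k₁ < u.length) (h₂ : k₂ < u.length),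
      k₁ < k₂ ∧
      (homExt ψ (u.take k₁)).length
        ≤ (Fintype.card Λ + 1) * (Finset.univ.sup fun γ => (ψ γ).length) ∧
      1 ≤ (homExt ψ ((u.drop k₁).take (k₂ - k₁))).length ∧
      (homExt ψ ((u.drop k₁).take (k₂ - k₁))).length
        ≤ (Fintype.card Λ + 1) * (Finset.univ.sup fun γ => (ψ γ).length) ∧
      φ (u.get ⟨k₁, h₁⟩) = φ (u.get ⟨k₂, h₂⟩) := by
  classical
  set M := Finset.univ.sup fun γ => (ψ γ).length with hM
  set v : List ℕ := u.map fun γ => (ψ γ).length with hv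
  have hvlen : v.length = u.length := by simp [hv]
  set g : ℕ → ℕ := fun i => v.getD i 0 with hg
  have htot : (homExt ψ u).length = v.sum := by
    simp only [homExt, List.length_flatten, List.map_map]
    rfl
  have hgM : ∀ i, g i ≤ M := by
    intro i
    rcases lt_or_ge i v.length with hi | hi
    · rw [hg]
      simp only [List.getD_eq_getElem v 0 hi]
      have hi' : i < u.length := hvlen ▸ hi
      simp only [hv, List.getElem_map]
      rw [hM]
      exact Finset.le_sup (f := fun γ => (ψ γ).length) (Finset.mem_univ _)
    · have h0 : v[i]? = none := List.getElem?_eq_none hi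
      simp [hg, List.getD, h0]
  set s : Finset ℕ := (Finset.range u.length).filter (fun i => g i ≠ 0) with hs
  -- sums over ranges are bounded by the number of nonzero positions
  have hsumR : ∀ k, k ≤ u.length →
      ∑ i ∈ Finset.range k, g i = ∑ i ∈ s.filter (fun x => x < k), g i := by
    intro k hk
    rw [← Finset.sum_filter_ne_zero]
    congr 1
    ext x
    simp only [Finset.mem_filter, Finset.mem_range, hs]
    constructor
    · rintro ⟨hx, hgx⟩; exact ⟨⟨lt_of_lt_of_le hx hk, hgx⟩, hx⟩
    · rintro ⟨⟨_, hgx⟩, hx⟩; exact ⟨hx, hgx⟩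
  have hsum_le : ∀ t : Finset ℕ, ∑ i ∈ t, g i ≤ t.card * M := by
    intro t
    calc ∑ i ∈ t, g i ≤ t.card • M := Finset.sum_le_card_nsmul _ _ M fun x _ => hgM x
    _ = t.card * M := smul_eq_mul ..
  -- the number of nonzero positions exceeds card Λ + 1
  have htotsum : v.sum = ∑ i ∈ Finset.range u.length, g i := by
    conv_lhs => rw [← @List.take_length _ v]
    rw [sum_take_eq, hvlen]
  have hcard : Fintype.card Λ + 1 < s.card := by
    by_contra hc
    push_neg at hc
    have h1 : (homExt ψ u).length ≤ s.card * M := by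
      rw [htot, htotsum, hsumR u.length le_rfl]
      calc ∑ i ∈ s.filter (fun x => x < u.length), g i
          ≤ (s.filter (fun x => x < u.length)).card * M := hsum_le _
        _ ≤ s.card * M := Nat.mul_le_mul_right _ (Finset.card_le_card (Finset.filter_subset _ _))
    exact absurd (lt_of_lt_of_le h (h1.trans (Nat.mul_le_mul_right _ hc))) (lt_irrefl _)
  set e := s.orderIsoOfFin rfl with he
  have hes : ∀ j : Fin s.card, (e j : ℕ) < u.length := by
    intro j
    have h2 : (e j : ℕ) ∈ (Finset.range u.length).filter (fun i => g i ≠ 0) := (e j).2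
    exact Finset.mem_range.mp (Finset.mem_filter.mp h2).1
  have hesne : ∀ j : Fin s.card, g (e j : ℕ) ≠ 0 := by
    intro j
    have h2 : (e j : ℕ) ∈ (Finset.range u.length).filter (fun i => g i ≠ 0) := (e j).2
    exact (Finset.mem_filter.mp h2).2
  -- pigeonhole on φ-values of the first card Λ + 1 nonzero positions
  have key : ∃ a b : Fin (Fintype.card Λ + 1), a < b ∧
      φ (u.get ⟨(e ⟨a, lt_trans a.isLt hcard⟩ : ℕ), hes _⟩)
        = φ (u.get ⟨(e ⟨b, lt_trans b.isLt hcard⟩ : ℕ), hes _⟩) := by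
    obtain ⟨a, b, hab, hF⟩ := Fintype.exists_ne_map_eq_of_card_lt
      (fun j : Fin (Fintype.card Λ + 1) =>
        φ (u.get ⟨(e ⟨j, lt_trans j.isLt hcard⟩ : ℕ), hes _⟩)) (by simp)
    rcases hab.lt_or_gt with hlt | hlt
    · exact ⟨a, b, hlt, hF⟩
    · exact ⟨b, a, hlt, hF.symm⟩
  obtain ⟨a, b, hab, hF⟩ := key
  set a' : Fin s.card := ⟨a, lt_trans a.isLt hcard⟩ with ha'
  set b' : Fin s.card := ⟨b, lt_trans b.isLt hcard⟩ with hb'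
  set k₁ := (e a' : ℕ) with hk₁
  set k₂ := (e b' : ℕ) with hk₂
  have hk12 : k₁ < k₂ := by
    have h1 : a' < b' := hab
    have := e.lt_iff_lt.mpr h1
    exact Subtype.coe_lt_coe.mpr this
  have hk₁u : k₁ < u.length := hes a'
  have hk₂u : k₂ < u.length := hes b'
  -- counting lemma: positions of s below e c number at most c
  have hcard_lt : ∀ c : Fin s.card, (s.filter (fun x => x < (e c : ℕ))).card ≤ (c : ℕ) := by
    intro c
    have := Finset.card_le_card_of_injOn
      (f := fun x => if hx : x ∈ s then ((e.symm ⟨x, hx⟩ : Fin s.card) : ℕ) else 0)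
      (s := s.filter (fun x => x < (e c : ℕ))) (t := Finset.range (c : ℕ)) ?_ ?_
    · simpa using this
    · intro x hx
      simp only [Finset.mem_coe, Finset.mem_filter] at hx
      simp only [dif_pos hx.1, Finset.mem_coe, Finset.mem_range]
      have h1 : (⟨x, hx.1⟩ : {y // y ∈ s}) < e c := Subtype.coe_lt_coe.mp hx.2
      have h2 : e.symm ⟨x, hx.1⟩ < c := by
        rw [← e.apply_symm_apply ⟨x, hx.1⟩] at h1
        exact e.lt_iff_lt.mp h1
      exact h2
    · intro x hx y hy hxy
      simp only [Finset.coe_filter, Set.mem_setOf_eq] at hx hy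
      simp only [dif_pos hx.1, dif_pos hy.1] at hxy
      have h3 := e.symm.injective (Fin.val_injective hxy)
      exact Subtype.mk_eq_mk.mp h3
  -- prefix bound
  have hpre : ∑ i ∈ Finset.range k₁, g i ≤ (Fintype.card Λ + 1) * M := by
    rw [hsumR k₁ (le_of_lt hk₁u)]
    calc ∑ i ∈ s.filter (fun x => x < k₁), g i
        ≤ (s.filter (fun x => x < k₁)).card * M := hsum_le _
      _ ≤ (a' : ℕ) * M := Nat.mul_le_mul_right _ (hcard_lt a')
      _ ≤ (Fintype.card Λ + 1) * M := Nat.mul_le_mul_right _ (le_of_lt a.isLt)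
  -- factor bound
  have hfac : ∑ i ∈ Finset.Ico k₁ k₂, g i ≤ (Fintype.card Λ + 1) * M := by
    have hsub : Finset.Ico k₁ k₂ ⊆ Finset.range k₂ := by
      intro x hx
      rw [Finset.mem_Ico] at hx
      exact Finset.mem_range.mpr hx.2
    calc ∑ i ∈ Finset.Ico k₁ k₂, g i ≤ ∑ i ∈ Finset.range k₂, g i :=
          Finset.sum_le_sum_of_subset hsub
      _ ≤ (Fintype.card Λ + 1) * M := by
          rw [hsumR k₂ (le_of_lt hk₂u)]
          calc ∑ i ∈ s.filter (fun x => x < k₂), g i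
              ≤ (s.filter (fun x => x < k₂)).card * M := hsum_le _
            _ ≤ (b' : ℕ) * M := Nat.mul_le_mul_right _ (hcard_lt b')
            _ ≤ (Fintype.card Λ + 1) * M := Nat.mul_le_mul_right _ (le_of_lt b.isLt)
  -- factor nonempty
  have hfac1 : 1 ≤ ∑ i ∈ Finset.Ico k₁ k₂, g i := by
    have hmem : k₁ ∈ Finset.Ico k₁ k₂ := Finset.mem_Ico.mpr ⟨le_rfl, hk12⟩
    have hne := hesne a'
    calc 1 ≤ g k₁ := Nat.one_le_iff_ne_zero.mpr hne
      _ ≤ ∑ i ∈ Finset.Ico k₁ k₂, g i :=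
          Finset.single_le_sum (f := g) (fun i _ => Nat.zero_le _) hmem
  -- translate homExt lengths into sums of g
  have hpre_len : (homExt ψ (u.take k₁)).length = ∑ i ∈ Finset.range k₁, g i := by
    rw [homExt, List.length_flatten]
    simp only [List.map_map, ← List.map_take]
    rw [show (u.take k₁).map (List.length ∘ ψ) = v.take k₁ by
      simp [hv, List.map_take]; rfl]
    exact sum_take_eq v k₁
  have hfac_len : (homExt ψ ((u.drop k₁).take (k₂ - k₁))).length
      = ∑ i ∈ Finset.Ico k₁ k₂, g i := by
    rw [homExt, List.length_flatten]
    simp only [List.map_map]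
    rw [show ((u.drop k₁).take (k₂ - k₁)).map (List.length ∘ ψ)
        = (v.drop k₁).take (k₂ - k₁) by
      simp [hv, List.map_take, List.map_drop]; rfl]
    rw [sum_take_eq, Finset.sum_Ico_eq_sum_range]
    exact Finset.sum_congr rfl fun i _ => by rw [hg]; exact getD_drop' v k₁ i
  exact ⟨k₁, k₂, hk₁u, hk₂u, hk12, hpre_len ▸ hpre, hfac_len ▸ hfac1, hfac_len ▸ hfac, hF⟩
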